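/- Let k be a positive integer, let G be a finite simple k-degenerate graph with k-degenerate vertex ordering v₁, …, v_n, and let d be an integer with k ≤ d ≤ Δ(G). Then the family of sets { N_R(v_i) : d(v_i) ≥ d } admits a system of distinct representatives of size ⌊(d − k)/k⌋; that is, one can choose mutually disjoint subsets R*(v_i) ⊆ N_R(v_i), one for each vertex v_i with d(v_i) ≥ d, with |R*(v_i)| ≥ ⌊(d − k)/k⌋ for each such i. -/

import Mathlib

/-- A linear forest: a graph in which every connected component is a path,
equivalently every vertex has degree at most 2 and there are no cycles. -/
def IsLinearForest {V : Type*} (G : SimpleGraph V) : Prop :=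
  G.IsAcyclic ∧ ∀ v : V, (G.neighborSet v).ncard ≤ 2

/-- A partition of the edge set of `G` into `t` linear forests (viewed as
spanning subgraphs). -/
def IsLinearForestPartition {V : Type*} (G : SimpleGraph V) (t : ℕ)
    (F : Fin t → SimpleGraph V) : Prop :=
  (∀ i, IsLinearForest (F i)) ∧
  (Pairwise fun i j : Fin t => Disjoint (F i).edgeSet (F j).edgeSet) ∧
  (⋃ i, (F i).edgeSet) = G.edgeSet

/-- `G` is `k`-degenerate: every (nonempty) subgraph of `G` has a vertex of
degree at most `k`. -/
def KDegenerate {V : Type*} (G : SimpleGraph V) (k : ℕ) : Prop :=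
  ∀ H : G.Subgraph, H.verts.Nonempty → ∃ v ∈ H.verts, (H.neighborSet v).ncard ≤ k

/-- In a `k`-degenerate graph with `k`-degenerate vertex ordering `v₁, …, v_n`
and any `d` with `k ≤ d ≤ Δ(G)`, the family `{ N_R(v_i) : d(v_i) ≥ d }` admits
a system of distinct representatives of size `⌊(d - k)/k⌋`. -/
theorem sdr_of_degenerate_ordering
    {V : Type*} [Fintype V] [DecidableEq V] (G : SimpleGraph V) [DecidableRel G.Adj]
    (k : ℕ) (hk : 1 ≤ k) (n : ℕ) (v : Fin n → V) (hv : Function.Bijective v)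
    (horder : ∀ i : Fin n, (G.neighborSet (v i) ∩ (v '' {j | j < i})).ncard ≤ k)
    (d : ℕ) (hd1 : k ≤ d) (hd2 : d ≤ G.maxDegree) :
    ∃ R : Fin n → Set V,
      (∀ i : Fin n, R i ⊆ G.neighborSet (v i) ∩ (v '' {j | i < j})) ∧
      (∀ i : Fin n, d ≤ G.degree (v i) → (d - k) / k ≤ (R i).ncard) ∧
      (Pairwise fun i j : Fin n => Disjoint (R i) (R j)) := by
  classical
  set q := (d - k) / k with hq
  -- right neighborhoods as finsets
  set NR : Fin n → Finset V := fun i =>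
    Finset.univ.filter (fun u => G.Adj (v i) u ∧ ∃ j : Fin n, i < j ∧ v j = u) with hNRdef
  have hNRmem : ∀ i u, u ∈ NR i ↔ G.Adj (v i) u ∧ ∃ j : Fin n, i < j ∧ v j = u := by
    intro i u; simp [hNRdef]
  have hNRsub : ∀ i, (NR i : Set V) ⊆ G.neighborSet (v i) ∩ v '' {j | i < j} := by
    intro i u hu
    rw [Finset.mem_coe, hNRmem] at hu
    obtain ⟨hadj, j, hij, hju⟩ := hu
    exact ⟨hadj, j, hij, hju⟩
  -- left neighborhoods as finsets, bounded by k
  set NL : Fin n → Finset V := fun i =>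
    Finset.univ.filter (fun u => G.Adj (v i) u ∧ ∃ j : Fin n, j < i ∧ v j = u) with hNLdef
  have hNL : ∀ i, (NL i).card ≤ k := by
    intro i
    have hcoe : (NL i : Set V) = G.neighborSet (v i) ∩ v '' {j | j < i} := by
      ext u
      simp only [hNLdef, Finset.coe_filter, Finset.mem_univ, true_and, Set.mem_setOf_eq,
        Set.mem_inter_iff, SimpleGraph.mem_neighborSet, Set.mem_image]
      try tauto
    have := horder i
    rw [← hcoe, Set.ncard_coe_finset] at this
    exact this
  -- big right neighborhoods for heavy vertices
  have hNRbig : ∀ i : Fin n, d ≤ G.degree (v i) → d - k ≤ (NR i).card := by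
    intro i hi
    have hsub : G.neighborFinset (v i) ⊆ NL i ∪ NR i := by
      intro u hu
      rw [SimpleGraph.mem_neighborFinset] at hu
      obtain ⟨j, rfl⟩ := hv.2 u
      have hne : j ≠ i := by
        rintro rfl; exact G.loopless.irrefl _ hu
      rcases lt_or_gt_of_ne hne with h | h
      · refine Finset.mem_union_left _ ?_
        rw [hNLdef]; exact Finset.mem_filter.mpr ⟨Finset.mem_univ _, hu, j, h, rfl⟩
      · refine Finset.mem_union_right _ ?_
        rw [hNRdef]; exact Finset.mem_filter.mpr ⟨Finset.mem_univ _, hu, j, h, rfl⟩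
    have hdeg : G.degree (v i) ≤ (NL i).card + (NR i).card := by
      calc G.degree (v i) = (G.neighborFinset (v i)).card := rfl
        _ ≤ (NL i ∪ NR i).card := Finset.card_le_card hsub
        _ ≤ (NL i).card + (NR i).card := Finset.card_union_le _ _
    have := hNL i
    omega
  -- each vertex is a right-neighbor of at most k indices
  have hfiber : ∀ (S : Finset (Fin n)) (u : V),
      (S.filter (fun i => u ∈ NR i)).card ≤ k := by
    intro S u
    obtain ⟨j, rfl⟩ := hv.2 u
    have himg : v '' ((S.filter (fun i => v j ∈ NR i)) : Set (Fin n)) ⊆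
        G.neighborSet (v j) ∩ v '' {j' | j' < j} := by
      rintro x ⟨i, hi, rfl⟩
      rw [Finset.mem_coe, Finset.mem_filter] at hi
      obtain ⟨hadj, j', hij', hj'⟩ := (hNRmem i (v j)).mp hi.2
      have : j' = j := hv.1 hj'
      subst this
      exact ⟨hadj.symm, i, hij', rfl⟩
    calc (S.filter (fun i => v j ∈ NR i)).card
        = ((S.filter (fun i => v j ∈ NR i)) : Set (Fin n)).ncard :=
          (Set.ncard_coe_finset _).symm
      _ = (v '' ((S.filter (fun i => v j ∈ NR i)) : Set (Fin n))).ncard :=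
          (Set.ncard_image_of_injective _ hv.1).symm
      _ ≤ (G.neighborSet (v j) ∩ v '' {j' | j' < j}).ncard :=
          Set.ncard_le_ncard himg (Set.toFinite _)
      _ ≤ k := horder j
  -- Hall's condition and Hall's theorem
  set ι := {i : Fin n // d ≤ G.degree (v i)} × Fin q with hι
  set t : ι → Finset V := fun p => NR p.1.1 with ht
  have hall : ∀ s : Finset ι, s.card ≤ (s.biUnion t).card := by
    intro s
    set S : Finset (Fin n) := s.image (fun p => p.1.1) with hS
    have hSheavy : ∀ i ∈ S, d ≤ G.degree (v i) := by
      intro i hi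
      rw [hS, Finset.mem_image] at hi
      obtain ⟨p, -, rfl⟩ := hi
      exact p.1.2
    have hU : s.biUnion t = S.biUnion NR := by
      rw [hS, Finset.image_biUnion]
    set U : Finset V := S.biUnion NR with hUdef
    -- s.card ≤ S.card * q
    have h1 : s.card ≤ S.card * q := by
      have hinj : Function.Injective (fun p : ι => (p.1.1, p.2)) := by
        rintro ⟨⟨i, hi⟩, m⟩ ⟨⟨i', hi'⟩, m'⟩ h
        simp only [Prod.mk.injEq] at h
        simp [Prod.ext_iff, Subtype.ext_iff, h.1, h.2]
      calc s.card = (s.image (fun p : ι => (p.1.1, p.2))).card :=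
            (Finset.card_image_of_injective _ hinj).symm
        _ ≤ (S ×ˢ (Finset.univ : Finset (Fin q))).card := by
            apply Finset.card_le_card
            intro x hx
            rw [Finset.mem_image] at hx
            obtain ⟨p, hp, rfl⟩ := hx
            exact Finset.mem_product.mpr ⟨Finset.mem_image_of_mem _ hp, Finset.mem_univ _⟩
        _ = S.card * q := by rw [Finset.card_product, Finset.card_univ, Fintype.card_fin]
    -- double counting: S.card * (d - k) ≤ k * U.card
    have h2 : S.card * (d - k) ≤ U.card * k := by
      have hlow : S.card * (d - k) ≤ ∑ i ∈ S, (NR i).card := by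
        have := Finset.card_nsmul_le_sum S (fun i => (NR i).card) (d - k)
          (fun i hi => hNRbig i (hSheavy i hi))
        simpa [smul_eq_mul] using this
      have hsum : ∑ i ∈ S, (NR i).card = ∑ i ∈ S, ∑ u ∈ U, (if u ∈ NR i then 1 else 0) := by
        apply Finset.sum_congr rfl
        intro i hi
        have hfil : U.filter (fun u => u ∈ NR i) = NR i := by
          ext u
          rw [Finset.mem_filter]
          constructor
          · exact fun h => h.2
          · intro h
            exact ⟨(Finset.subset_biUnion_of_mem NR hi) h, h⟩
        have h4 : (NR i).card = (U.filter (fun u => u ∈ NR i)).card := by rw [hfil]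
        rw [h4, Finset.card_filter]
      have hup : ∑ i ∈ S, (NR i).card ≤ U.card * k := by
        rw [hsum, Finset.sum_comm]
        calc ∑ u ∈ U, ∑ i ∈ S, (if u ∈ NR i then 1 else 0)
            = ∑ u ∈ U, (S.filter (fun i => u ∈ NR i)).card := by
              apply Finset.sum_congr rfl
              intro u _
              rw [Finset.card_filter]
          _ ≤ U.card * k := by
              have := Finset.sum_le_card_nsmul U (fun u => (S.filter (fun i => u ∈ NR i)).card)
                k (fun u _ => hfiber S u)
              simpa [smul_eq_mul] using this
      exact hlow.trans hup
    -- combine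
    have hqk : q * k ≤ d - k := Nat.div_mul_le_self (d - k) k
    have h3 : S.card * q ≤ U.card := by
      have : S.card * q * k ≤ U.card * k := by
        calc S.card * q * k = S.card * (q * k) := by ring
          _ ≤ S.card * (d - k) := Nat.mul_le_mul_left _ hqk
          _ ≤ U.card * k := h2
      exact Nat.le_of_mul_le_mul_right this hk
    rw [hU]
    exact h1.trans h3
  obtain ⟨f, hfinj, hft⟩ := (Finset.all_card_le_biUnion_card_iff_exists_injective t).mp hall
  -- define the representative sets
  refine ⟨fun i => if h : d ≤ G.degree (v i) then
      Set.range (fun m : Fin q => f (⟨i, h⟩, m)) else ∅, ?_, ?_, ?_⟩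
  · intro i
    by_cases h : d ≤ G.degree (v i)
    · simp only [dif_pos h]
      rintro x ⟨m, rfl⟩
      exact hNRsub i (hft (⟨i, h⟩, m))
    · simp only [dif_neg h]; exact Set.empty_subset _
  · intro i hi
    simp only [dif_pos hi]
    have hginj : Function.Injective (fun m : Fin q => f (⟨i, hi⟩, m)) := by
      intro m m' h
      have := hfinj h
      simpa using congrArg Prod.snd this
    calc q = (Set.univ : Set (Fin q)).ncard := by
          rw [Set.ncard_univ, Nat.card_eq_fintype_card, Fintype.card_fin]
      _ = ((fun m : Fin q => f (⟨i, hi⟩, m)) '' Set.univ).ncard :=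
          (Set.ncard_image_of_injective _ hginj).symm
      _ = (Set.range (fun m : Fin q => f (⟨i, hi⟩, m))).ncard := by rw [Set.image_univ]
      _ ≤ (Set.range (fun m : Fin q => f (⟨i, hi⟩, m))).ncard := le_rfl
  · intro i j hij
    dsimp only
    by_cases hi : d ≤ G.degree (v i)
    · by_cases hj : d ≤ G.degree (v j)
      · simp only [dif_pos hi, dif_pos hj]
        rw [Set.disjoint_left]
        rintro x ⟨m, rfl⟩ ⟨m', hm'⟩
        have h1 := hfinj hm'
        have h2 : j = i := congrArg (fun p : ι => p.1.1) h1
        exact hij h2.symm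
      · simp only [dif_neg hj]; exact Set.disjoint_empty _
    · simp only [dif_neg hi]; exact Set.empty_disjoint _
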